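/- The one-sided interface values of the minmod reconstruction, $u^-_{j-1/2} = u_{j-1} + \frac{1}{2}\mathrm{mm}(\theta(u_{j-1}-u_{j-2}), \frac{u_j - u_{j-2}}{2}, \theta(u_j - u_{j-1}))$ and $u^+_{j-1/2} = u_j - \frac{1}{2}\mathrm{mm}(\theta(u_j - u_{j-1}), \frac{u_{j+1}-u_{j-1}}{2}, \theta(u_{j+1}-u_j))$ with $\theta \in [1,2]$, satisfy the local maximum principle: both $u^\pm_{j-1/2}$ lie in the interval $[\min(u_{j-2}, u_{j-1}, u_j, u_{j+1}), \max(u_{j-2}, u_{j-1}, u_j, u_{j+1})]$. -/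
import Mathlib


open Set

/-- The minmod function of three real arguments. -/
noncomputable def minmod3 (a b c : ℝ) : ℝ :=
  max (min a 0) (max (min b 0) (min c 0)) +
    min (max a 0) (min (max b 0) (max c 0))

lemma minmod3_bounds (a b c : ℝ) :
    min a 0 ≤ minmod3 a b c ∧ minmod3 a b c ≤ max a 0 ∧
    min c 0 ≤ minmod3 a b c ∧ minmod3 a b c ≤ max c 0 := by
  have t1 : max (min a 0) (max (min b 0) (min c 0)) ≤ 0 :=
    max_le (min_le_right _ _) (max_le (min_le_right _ _) (min_le_right _ _))
  have t2 : (0:ℝ) ≤ min (max a 0) (min (max b 0) (max c 0)) :=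
    le_min (le_max_right _ _) (le_min (le_max_right _ _) (le_max_right _ _))
  have t3 : min (max a 0) (min (max b 0) (max c 0)) ≤ max c 0 :=
    (min_le_right _ _).trans (min_le_right _ _)
  have t4 : min c 0 ≤ max (min a 0) (max (min b 0) (min c 0)) :=
    (le_max_right _ _).trans (le_max_right _ _)
  have t5 : min (max a 0) (min (max b 0) (max c 0)) ≤ max a 0 := min_le_left _ _
  have t6 : min a 0 ≤ max (min a 0) (max (min b 0) (min c 0)) := le_max_left _ _
  unfold minmod3
  refine ⟨by linarith, by linarith, by linarith, by linarith⟩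

lemma minmod3_half_bounds (θ : ℝ) (h1 : 1 ≤ θ) (h2 : θ ≤ 2) (d b c : ℝ) :
    min 0 d ≤ (1/2) * minmod3 (θ * d) b c ∧ (1/2) * minmod3 (θ * d) b c ≤ max 0 d := by
  obtain ⟨l, r, -, -⟩ := minmod3_bounds (θ * d) b c
  rcases le_total d 0 with hd | hd
  · have hmin : min (θ * d) 0 = θ * d := min_eq_left (by nlinarith)
    have hmax : max (θ * d) 0 = 0 := max_eq_right (by nlinarith)
    rw [hmin] at l; rw [hmax] at r
    constructor
    · rw [min_eq_right hd]; nlinarith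
    · rw [max_eq_left hd]; linarith
  · have hmin : min (θ * d) 0 = 0 := min_eq_right (by nlinarith)
    have hmax : max (θ * d) 0 = θ * d := max_eq_left (by nlinarith)
    rw [hmin] at l; rw [hmax] at r
    constructor
    · rw [min_eq_left hd]; linarith
    · rw [max_eq_right hd]; nlinarith

lemma minmod3_half_bounds' (θ : ℝ) (h1 : 1 ≤ θ) (h2 : θ ≤ 2) (a b d : ℝ) :
    min 0 d ≤ (1/2) * minmod3 a b (θ * d) ∧ (1/2) * minmod3 a b (θ * d) ≤ max 0 d := by
  obtain ⟨-, -, l, r⟩ := minmod3_bounds a b (θ * d)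
  rcases le_total d 0 with hd | hd
  · have hmin : min (θ * d) 0 = θ * d := min_eq_left (by nlinarith)
    have hmax : max (θ * d) 0 = 0 := max_eq_right (by nlinarith)
    rw [hmin] at l; rw [hmax] at r
    constructor
    · rw [min_eq_right hd]; nlinarith
    · rw [max_eq_left hd]; linarith
  · have hmin : min (θ * d) 0 = 0 := min_eq_right (by nlinarith)
    have hmax : max (θ * d) 0 = θ * d := max_eq_left (by nlinarith)
    rw [hmin] at l; rw [hmax] at r
    constructor
    · rw [min_eq_left hd]; linarith
    · rw [max_eq_right hd]; nlinarith

/-- Local maximum principle for the one-sided interface values of the minmod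
reconstruction: for `θ ∈ [1,2]`, both `u⁻_{j-1/2}` and `u⁺_{j-1/2}` lie between
the minimum and maximum of the neighboring cell averages
`u_{j-2}, u_{j-1}, u_j, u_{j+1}`. -/
theorem minmod_interface_values_local_maximum_principle
    (θ : ℝ) (hθ : θ ∈ Icc (1:ℝ) 2) (u : ℤ → ℝ) (j : ℤ) :
    (min (u (j - 2)) (min (u (j - 1)) (min (u j) (u (j + 1)))) ≤
        u (j - 1) + (1 / 2) * minmod3 (θ * (u (j - 1) - u (j - 2)))
          ((u j - u (j - 2)) / 2) (θ * (u j - u (j - 1))) ∧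
      u (j - 1) + (1 / 2) * minmod3 (θ * (u (j - 1) - u (j - 2)))
          ((u j - u (j - 2)) / 2) (θ * (u j - u (j - 1))) ≤
        max (u (j - 2)) (max (u (j - 1)) (max (u j) (u (j + 1))))) ∧
    (min (u (j - 2)) (min (u (j - 1)) (min (u j) (u (j + 1)))) ≤
        u j - (1 / 2) * minmod3 (θ * (u j - u (j - 1)))
          ((u (j + 1) - u (j - 1)) / 2) (θ * (u (j + 1) - u j)) ∧
      u j - (1 / 2) * minmod3 (θ * (u j - u (j - 1)))
          ((u (j + 1) - u (j - 1)) / 2) (θ * (u (j + 1) - u j)) ≤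
        max (u (j - 2)) (max (u (j - 1)) (max (u j) (u (j + 1))))) := by
  obtain ⟨h1, h2⟩ := hθ
  obtain ⟨lA, rA⟩ := minmod3_half_bounds' θ h1 h2
    (θ * (u (j - 1) - u (j - 2))) ((u j - u (j - 2)) / 2) (u j - u (j - 1))
  obtain ⟨lB, rB⟩ := minmod3_half_bounds θ h1 h2
    (u j - u (j - 1)) ((u (j + 1) - u (j - 1)) / 2) (θ * (u (j + 1) - u j))
  have m1 : min (u (j - 2)) (min (u (j - 1)) (min (u j) (u (j + 1)))) ≤ u (j - 1) :=
    (min_le_right _ _).trans (min_le_left _ _)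
  have m2 : min (u (j - 2)) (min (u (j - 1)) (min (u j) (u (j + 1)))) ≤ u j :=
    (min_le_right _ _).trans ((min_le_right _ _).trans (min_le_left _ _))
  have M1 : u (j - 1) ≤ max (u (j - 2)) (max (u (j - 1)) (max (u j) (u (j + 1)))) :=
    (le_max_left _ _).trans (le_max_right _ _)
  have M2 : u j ≤ max (u (j - 2)) (max (u (j - 1)) (max (u j) (u (j + 1)))) :=
    ((le_max_left _ _).trans (le_max_right _ _)).trans (le_max_right _ _)
  have d1 := min_le_right (0:ℝ) (u j - u (j - 1))
  have d2 := min_le_left (0:ℝ) (u j - u (j - 1))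
  have d3 := le_max_right (0:ℝ) (u j - u (j - 1))
  have d4 := le_max_left (0:ℝ) (u j - u (j - 1))
  rcases le_total (u j - u (j - 1)) 0 with hd | hd
  · rw [min_eq_right hd] at lA lB
    rw [max_eq_left hd] at rA rB
    exact ⟨⟨by linarith, by linarith⟩, by constructor <;> linarith⟩
  · rw [min_eq_left hd] at lA lB
    rw [max_eq_right hd] at rA rB
    exact ⟨⟨by linarith, by linarith⟩, by constructor <;> linarith⟩
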